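/- arXiv:0706.2491 — 2 statements merged into one kernel-verified Lean document; each statement's English description precedes it below -/
import Mathlib

section
/- Let F : C → B be a covering of k-categories with C connected, and suppose that for some object b of B the fibre F⁻¹(b) is a singleton. Then every fibre of F is a singleton, and F is an isomorphism of k-categories: F is bijective on objects and induces a k-linear bijection C(x,y) → B(F(x),F(y)) for all objects x, y of C. -/
open CategoryTheory

universe w v u

section CoveringDefs

variable (k : Type w) [CommRing k]

/-- A functor between `k`-linear categories is `k`-linear:
it is additive and commutes with the scalar action on morphisms. -/
def IsLinearFunctor {C : Type u} [Category.{v} C] [Preadditive C] [CategoryTheory.Linear k C]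
    {B : Type u} [Category.{v} B] [Preadditive B] [CategoryTheory.Linear k B]
    (F : C ⥤ B) : Prop :=
  (∀ (x y : C) (f g : x ⟶ y), F.map (f + g) = F.map f + F.map g) ∧
  (∀ (x y : C) (r : k) (f : x ⟶ y), F.map (r • f) = r • F.map f)

variable {C : Type u} [Category.{v} C] [Preadditive C] [CategoryTheory.Linear k C]
variable {B : Type u} [Category.{v} B] [Preadditive B] [CategoryTheory.Linear k B]

/-- The canonical map `⊕_{y ∈ F⁻¹(c)} C(x,y) →+ B(F(x),c)` induced by `F`
on the source star. -/
noncomputable def starOutHom (F : C ⥤ B) (hF : IsLinearFunctor k F) (x : C) (c : B) :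
    (DirectSum {y : C // F.obj y = c} (fun y => (x ⟶ y.1))) →+ (F.obj x ⟶ c) := by
  classical
  exact DirectSum.toAddMonoid fun y =>
    AddMonoidHom.mk' (fun f => F.map f ≫ eqToHom y.2)
      (fun f g => by rw [hF.1 _ _ f g, Preadditive.add_comp])

/-- The canonical map `⊕_{y ∈ F⁻¹(c)} C(y,x) →+ B(c,F(x))` induced by `F`
on the target star. -/
noncomputable def starInHom (F : C ⥤ B) (hF : IsLinearFunctor k F) (x : C) (c : B) :
    (DirectSum {y : C // F.obj y = c} (fun y => (y.1 ⟶ x))) →+ (c ⟶ F.obj x) := by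
  classical
  exact DirectSum.toAddMonoid fun y =>
    AddMonoidHom.mk' (fun f => eqToHom y.2.symm ≫ F.map f)
      (fun f g => by rw [hF.1 _ _ f g, Preadditive.comp_add])

/-- `F : C ⥤ B` is a covering of `k`-categories: it is a `k`-linear functor,
surjective on objects, inducing bijections on all source and target stars. -/
def IsCovering (F : C ⥤ B) : Prop :=
  ∃ hF : IsLinearFunctor k F,
    Function.Surjective F.obj ∧
    (∀ (x : C) (c : B), Function.Bijective (starOutHom k F hF x c)) ∧
    (∀ (x : C) (c : B), Function.Bijective (starInHom k F hF x c))

end CoveringDefs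

/-- A `k`-category is connected if the equivalence relation generated by
"there is a nonzero morphism from `x` to `y`" relates any two objects. -/
def IsConnectedKCat (C : Type u) [Category.{v} C] [Preadditive C] : Prop :=
  ∀ x y : C, Relation.EqvGen (fun a b : C => ∃ f : a ⟶ b, f ≠ 0) x y

section GaloisDefs

variable (k : Type w) [CommRing k]
variable {C : Type u} [Category.{v} C] [Preadditive C] [CategoryTheory.Linear k C]
variable {B : Type u} [Category.{v} B] [Preadditive B] [CategoryTheory.Linear k B]
variable {D : Type u} [Category.{v} D] [Preadditive D] [CategoryTheory.Linear k D]

/-- `H` belongs to `Aut₁ F`: it is an invertible `k`-linear endofunctor with `F ∘ H = F`. -/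
def MemAut1 (F : C ⥤ B) (H : C ⥤ C) : Prop :=
  IsLinearFunctor k H ∧
  (∃ Hinv : C ⥤ C, H ⋙ Hinv = 𝟭 C ∧ Hinv ⋙ H = 𝟭 C) ∧
  H ⋙ F = F

/-- A covering is Galois if its source is connected and `Aut₁ F` acts transitively
on some fibre. -/
def IsGaloisCovering (F : C ⥤ B) : Prop :=
  IsCovering k F ∧ IsConnectedKCat C ∧
  ∃ b₀ : B, ∀ x y : C, F.obj x = b₀ → F.obj y = b₀ →
    ∃ H : C ⥤ C, MemAut1 k F H ∧ H.obj x = y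

/-- A morphism `(H, J)` of coverings from `F : C ⥤ B` to `G : D ⥤ B`:
`H` and `J` are `k`-linear, `J` is an isomorphism which is the identity on objects,
and `G ∘ H = J ∘ F`. -/
def IsCoveringMorphism (F : C ⥤ B) (G : D ⥤ B) (H : C ⥤ D) (J : B ⥤ B) : Prop :=
  IsLinearFunctor k H ∧ IsLinearFunctor k J ∧
  (∃ Jinv : B ⥤ B, J ⋙ Jinv = 𝟭 B ∧ Jinv ⋙ J = 𝟭 B) ∧
  (∀ b : B, J.obj b = b) ∧
  H ⋙ G = F ⋙ J

end GaloisDefs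

/-- A universal covering: a Galois covering `U` such that for every Galois covering
`F : C ⥤ B` and every pair of objects `u₀`, `c₀` above the same object of `B`,
there is a unique `k`-linear functor `H` with `F ∘ H = U` and `H u₀ = c₀`. -/
def IsUniversalCovering (k : Type w) [CommRing k]
    {U' : Type u} [Category.{v} U'] [Preadditive U'] [CategoryTheory.Linear k U']
    {B : Type u} [Category.{v} B] [Preadditive B] [CategoryTheory.Linear k B]
    (U : U' ⥤ B) : Prop :=
  IsGaloisCovering k U ∧
  ∀ (C : Type u) [Category.{v} C] [Preadditive C] [CategoryTheory.Linear k C]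
    (F : C ⥤ B), IsGaloisCovering k F →
    ∀ (u₀ : U') (c₀ : C), U.obj u₀ = F.obj c₀ →
      ∃! H : U' ⥤ C, IsLinearFunctor k H ∧ H ⋙ F = U ∧ H.obj u₀ = c₀

/-- Given a functor `F : C ⥤ B`, a choice `x` of objects of `C` above each object of `B`,
and an endofunctor `H` of `C`, the subset `Z_H(c,b) = F(C(x_b, H x_c))` of `B(b,c)`. -/
def gradeSet {C : Type u} [Category.{v} C] {B : Type u} [Category.{v} B]
    (F : C ⥤ B) (x : B → C) (H : C ⥤ C) (b c : B) : Set (b ⟶ c) :=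
  {g | ∃ (h₁ : b = F.obj (x b)) (h₂ : F.obj (H.obj (x c)) = c)
        (f : x b ⟶ H.obj (x c)), g = eqToHom h₁ ≫ F.map f ≫ eqToHom h₂}

/-- The homogeneous component `Z_H(c,b)` as a `k`-submodule of `B(b,c)`. -/
noncomputable def gradeSubmodule (k : Type w) [CommRing k]
    {C : Type u} [Category.{v} C]
    {B : Type u} [Category.{v} B] [Preadditive B] [CategoryTheory.Linear k B]
    (F : C ⥤ B) (x : B → C) (H : C ⥤ C) (b c : B) : Submodule k (b ⟶ c) :=
  Submodule.span k (gradeSet F x H b c)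


section AuxProof

open DirectSum

lemma auxDS_singleton_bij {ι : Type*} [DecidableEq ι] {M : ι → Type*}
    [∀ i, AddCommMonoid (M i)] {N : Type*} [AddCommMonoid N]
    (φ : (⨁ i, M i) →+ N) (hφ : Function.Bijective φ)
    [Subsingleton ι] (i₀ : ι) :
    Function.Bijective (fun m : M i₀ => φ (DirectSum.of M i₀ m)) := by
  constructor
  · intro a b h
    have h2 := congrArg (fun d => d i₀) (hφ.1 h)
    simpa using h2
  · intro n
    obtain ⟨d, hd⟩ := hφ.2 n
    refine ⟨d i₀, ?_⟩
    have hde : DirectSum.of M i₀ (d i₀) = d := by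
      apply DFinsupp.ext; intro i
      obtain rfl := Subsingleton.elim i₀ i
      simp
    show φ ((of M i₀) (d i₀)) = n
    rw [hde, hd]

lemma auxDS_zero_of_ne {ι : Type*} [DecidableEq ι] {M : ι → Type*}
    [∀ i, AddCommMonoid (M i)] {N : Type*} [AddCommMonoid N]
    (φ : (⨁ i, M i) →+ N) (hinj : Function.Injective φ)
    (i₀ : ι) (hsurj : Function.Surjective (fun m : M i₀ => φ (DirectSum.of M i₀ m)))
    {i : ι} (hne : i ≠ i₀) (m : M i) : m = 0 := by
  obtain ⟨m', hm'⟩ := hsurj (φ (DirectSum.of M i m))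
  have h := congrArg (fun d => d i) (hinj hm')
  simpa [DirectSum.of_eq_of_ne _ _ _ hne] using h.symm

variable {k : Type w} [CommRing k]
variable {C : Type u} [Category.{v} C] [Preadditive C] [CategoryTheory.Linear k C]
variable {B : Type u} [Category.{v} B] [Preadditive B] [CategoryTheory.Linear k B]

lemma starOutHom_of_apply [DecidableEq C] (F : C ⥤ B) (hF : IsLinearFunctor k F)
    (x : C) (c : B) (y : {y : C // F.obj y = c}) (f : x ⟶ y.1) :
    starOutHom k F hF x c (DirectSum.of _ y f) = F.map f ≫ eqToHom y.2 := by
  simp only [starOutHom]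
  exact DirectSum.toAddMonoid_of (fun y => AddMonoidHom.mk'
      (fun f => F.map f ≫ eqToHom y.2)
      (fun f g => by rw [hF.1 _ _ f g, Preadditive.add_comp])) y f

lemma starInHom_of_apply [DecidableEq C] (F : C ⥤ B) (hF : IsLinearFunctor k F)
    (x : C) (c : B) (y : {y : C // F.obj y = c}) (f : y.1 ⟶ x) :
    starInHom k F hF x c (DirectSum.of _ y f) = eqToHom y.2.symm ≫ F.map f := by
  simp only [starInHom]
  exact DirectSum.toAddMonoid_of (fun y => AddMonoidHom.mk'
      (fun f => eqToHom y.2.symm ≫ F.map f)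
      (fun f g => by rw [hF.1 _ _ f g, Preadditive.comp_add])) y f

lemma linFunctor_map_zero (F : C ⥤ B) (hF : IsLinearFunctor k F) (x y : C) :
    F.map (0 : x ⟶ y) = 0 := by
  have h := hF.2 x y 0 0
  simpa using h

lemma bij_map_of_fibre_out (F : C ⥤ B) (hL : IsLinearFunctor k F)
    (hin : ∀ (x : C) (c : B), Function.Bijective (starInHom k F hL x c))
    (z w : C) (hz : ∀ u : C, F.obj u = F.obj z → u = z) :
    Function.Bijective (fun f : z ⟶ w => F.map f) := by
  classical
  haveI : Subsingleton {u : C // F.obj u = F.obj z} :=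
    ⟨fun a b => Subtype.ext ((hz _ a.2).trans (hz _ b.2).symm)⟩
  have h := auxDS_singleton_bij (starInHom k F hL w (F.obj z)) (hin w (F.obj z))
      (⟨z, rfl⟩ : {u : C // F.obj u = F.obj z})
  have he : (fun f : z ⟶ w => starInHom k F hL w (F.obj z)
      (DirectSum.of (fun u : {u : C // F.obj u = F.obj z} => (u.1 ⟶ w)) ⟨z, rfl⟩ f))
      = fun f : z ⟶ w => F.map f := by
    funext f
    rw [starInHom_of_apply]
    simp
  rwa [he] at h

lemma bij_map_of_fibre_in (F : C ⥤ B) (hL : IsLinearFunctor k F)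
    (hout : ∀ (x : C) (c : B), Function.Bijective (starOutHom k F hL x c))
    (z w : C) (hz : ∀ u : C, F.obj u = F.obj z → u = z) :
    Function.Bijective (fun f : w ⟶ z => F.map f) := by
  classical
  haveI : Subsingleton {u : C // F.obj u = F.obj z} :=
    ⟨fun a b => Subtype.ext ((hz _ a.2).trans (hz _ b.2).symm)⟩
  have h := auxDS_singleton_bij (starOutHom k F hL w (F.obj z)) (hout w (F.obj z))
      (⟨z, rfl⟩ : {u : C // F.obj u = F.obj z})
  have he : (fun f : w ⟶ z => starOutHom k F hL w (F.obj z)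
      (DirectSum.of (fun u : {u : C // F.obj u = F.obj z} => (w ⟶ u.1)) ⟨z, rfl⟩ f))
      = fun f : w ⟶ z => F.map f := by
    funext f
    rw [starOutHom_of_apply]
    simp
  rwa [he] at h

lemma propagate_fwd (F : C ⥤ B) (hL : IsLinearFunctor k F)
    (hout : ∀ (x : C) (c : B), Function.Bijective (starOutHom k F hL x c))
    (hin : ∀ (x : C) (c : B), Function.Bijective (starInHom k F hL x c))
    (z w : C) (f : z ⟶ w) (hf : f ≠ 0)
    (hz : ∀ u : C, F.obj u = F.obj z → u = z) :
    ∀ u : C, F.obj u = F.obj w → u = w := by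
  classical
  intro w' hw'
  by_contra hne
  have hbw : Function.Bijective (fun f : z ⟶ w => F.map f) :=
    bij_map_of_fibre_out F hL hin z w hz
  have hbw' : Function.Bijective (fun f : z ⟶ w' => F.map f) :=
    bij_map_of_fibre_out F hL hin z w' hz
  have hF0 : F.map (0 : z ⟶ w) = 0 := linFunctor_map_zero F hL z w
  have hFf : F.map f ≠ 0 := fun h => hf (hbw.1 (h.trans hF0.symm))
  set g : F.obj z ⟶ F.obj w' := F.map f ≫ eqToHom hw'.symm with hg
  have hgne : g ≠ 0 := by
    intro h
    apply hFf
    have h2 : g ≫ eqToHom hw' = F.map f := by simp [hg]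
    rw [← h2, h, Limits.zero_comp]
  obtain ⟨f', hf'⟩ := hbw'.2 g
  have hf'ne : f' ≠ 0 := by
    intro h; apply hgne
    rw [← hf']; show F.map f' = 0
    rw [h, linFunctor_map_zero F hL]
  apply hf'ne
  refine auxDS_zero_of_ne (starOutHom k F hL z (F.obj w)) (hout z (F.obj w)).1
    (⟨w, rfl⟩ : {u : C // F.obj u = F.obj w}) ?_
    (i := (⟨w', hw'⟩ : {u : C // F.obj u = F.obj w}))
    (fun h => hne (congrArg Subtype.val h)) f'
  have he : (fun m : z ⟶ w => starOutHom k F hL z (F.obj w)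
      (DirectSum.of (fun u : {u : C // F.obj u = F.obj w} => (z ⟶ u.1)) ⟨w, rfl⟩ m))
      = fun m : z ⟶ w => F.map m := by
    funext m; rw [starOutHom_of_apply]; simp
  rw [he]; exact hbw.2

lemma propagate_bwd (F : C ⥤ B) (hL : IsLinearFunctor k F)
    (hout : ∀ (x : C) (c : B), Function.Bijective (starOutHom k F hL x c))
    (hin : ∀ (x : C) (c : B), Function.Bijective (starInHom k F hL x c))
    (z w : C) (f : w ⟶ z) (hf : f ≠ 0)
    (hz : ∀ u : C, F.obj u = F.obj z → u = z) :
    ∀ u : C, F.obj u = F.obj w → u = w := by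
  classical
  intro w' hw'
  by_contra hne
  have hbw : Function.Bijective (fun f : w ⟶ z => F.map f) :=
    bij_map_of_fibre_in F hL hout z w hz
  have hbw' : Function.Bijective (fun f : w' ⟶ z => F.map f) :=
    bij_map_of_fibre_in F hL hout z w' hz
  have hF0 : F.map (0 : w ⟶ z) = 0 := linFunctor_map_zero F hL w z
  have hFf : F.map f ≠ 0 := fun h => hf (hbw.1 (h.trans hF0.symm))
  set g : F.obj w' ⟶ F.obj z := eqToHom hw' ≫ F.map f with hg
  have hgne : g ≠ 0 := by
    intro h
    apply hFf
    have h2 : eqToHom hw'.symm ≫ g = F.map f := by simp [hg]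
    rw [← h2, h, Limits.comp_zero]
  obtain ⟨f', hf'⟩ := hbw'.2 g
  have hf'ne : f' ≠ 0 := by
    intro h; apply hgne
    rw [← hf']; show F.map f' = 0
    rw [h, linFunctor_map_zero F hL]
  apply hf'ne
  refine auxDS_zero_of_ne (starInHom k F hL z (F.obj w)) (hin z (F.obj w)).1
    (⟨w, rfl⟩ : {u : C // F.obj u = F.obj w}) ?_
    (i := (⟨w', hw'⟩ : {u : C // F.obj u = F.obj w}))
    (fun h => hne (congrArg Subtype.val h)) f'
  have he : (fun m : w ⟶ z => starInHom k F hL z (F.obj w)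
      (DirectSum.of (fun u : {u : C // F.obj u = F.obj w} => (u.1 ⟶ z)) ⟨w, rfl⟩ m))
      = fun m : w ⟶ z => F.map m := by
    funext m; rw [starInHom_of_apply]; simp
  rw [he]; exact hbw.2

end AuxProof

theorem covering_iso_of_singleton_fibre (k : Type w) [CommRing k]
    {C : Type u} [Category.{v} C] [Preadditive C] [CategoryTheory.Linear k C]
    {B : Type u} [Category.{v} B] [Preadditive B] [CategoryTheory.Linear k B]
    (F : C ⥤ B) (hF : IsCovering k F) (hC : IsConnectedKCat C)
    (b : B) (hb : ∃! x : C, F.obj x = b) :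
    (∀ c : B, ∃! x : C, F.obj x = c) ∧
    Function.Bijective F.obj ∧
    ∀ x y : C, Function.Bijective (fun f : x ⟶ y => F.map f) := by
  classical
  obtain ⟨hL, hsurj, hout, hin⟩ := hF
  obtain ⟨x₀, hx₀, hx₀u⟩ := hb
  have hmain : ∀ a c : C, Relation.EqvGen (fun a b : C => ∃ f : a ⟶ b, f ≠ 0) a c →
      ((∀ u : C, F.obj u = F.obj a → u = a) ↔ (∀ u : C, F.obj u = F.obj c → u = c)) := by
    intro a c h
    induction h with
    | rel a c h =>
      obtain ⟨f, hf⟩ := h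
      exact ⟨fun ha => propagate_fwd F hL hout hin a c f hf ha,
             fun hc => propagate_bwd F hL hout hin c a f hf hc⟩
    | refl a => exact Iff.rfl
    | symm _ _ _ ih => exact ih.symm
    | trans _ _ _ _ _ ih1 ih2 => exact ih1.trans ih2
  have hx : ∀ u : C, F.obj u = F.obj x₀ → u = x₀ := fun u hu => hx₀u u (hu.trans hx₀)
  have hG : ∀ z : C, ∀ u : C, F.obj u = F.obj z → u = z := fun z =>
    (hmain z x₀ (hC z x₀)).mpr hx
  refine ⟨?_, ⟨fun a b h => hG b a h, hsurj⟩, ?_⟩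
  · intro c
    obtain ⟨x, hx'⟩ := hsurj c
    exact ⟨x, hx', fun u hu => hG x u (by rw [hu, hx'])⟩
  · intro x y
    exact bij_map_of_fibre_out F hL hin x y (hG x)
end

section
/- Let F : C → B and G : D → B be Galois coverings of k-categories, and let (H,J) be a morphism from F to G. Then H is surjective on objects. -/
open CategoryTheory

universe w v u

section AuxProof

variable {k : Type w} [CommRing k]
variable {C : Type u} [Category.{v} C] [Preadditive C] [CategoryTheory.Linear k C]
variable {B : Type u} [Category.{v} B] [Preadditive B] [CategoryTheory.Linear k B]
variable {D : Type u} [Category.{v} D] [Preadditive D] [CategoryTheory.Linear k D]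

lemma starOutHom_of (F : C ⥤ B) (hF : IsLinearFunctor k F) (x : C) (c : B)
    [DecidableEq {y : C // F.obj y = c}]
    (y : {y : C // F.obj y = c}) (f : x ⟶ y.1) :
    starOutHom k F hF x c
      (DirectSum.of (fun y : {y : C // F.obj y = c} => (x ⟶ y.1)) y f)
      = F.map f ≫ eqToHom y.2 := by
  unfold starOutHom
  erw [DirectSum.toAddMonoid_of]
  rfl

lemma starInHom_of (F : C ⥤ B) (hF : IsLinearFunctor k F) (x : C) (c : B)
    [DecidableEq {y : C // F.obj y = c}]
    (y : {y : C // F.obj y = c}) (f : y.1 ⟶ x) :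
    starInHom k F hF x c
      (DirectSum.of (fun y : {y : C // F.obj y = c} => (y.1 ⟶ x)) y f)
      = eqToHom y.2.symm ≫ F.map f := by
  unfold starInHom
  erw [DirectSum.toAddMonoid_of]
  rfl

lemma step_out (F : C ⥤ B) (G : D ⥤ B) (H : C ⥤ D) (J Jinv : B ⥤ B)
    (hFlin : IsLinearFunctor k F) (hGlin : IsLinearFunctor k G)
    (hHlin : IsLinearFunctor k H) (hJlin : IsLinearFunctor k J)
    (hJ2 : Jinv ⋙ J = 𝟭 B)
    (hJobj : ∀ b, J.obj b = b)
    (hJinvobj : ∀ b, Jinv.obj b = b)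
    (hcomm : H ⋙ G = F ⋙ J)
    (hFout : ∀ (x : C) (c : B), Function.Bijective (starOutHom k F hFlin x c))
    (hGout : ∀ (x : D) (c : B), Function.Bijective (starOutHom k G hGlin x c))
    (c : C) (dd : D) (f : H.obj c ⟶ dd) (hf : f ≠ 0) :
    ∃ c', H.obj c' = dd := by
  classical
  by_contra hno
  push_neg at hno
  have hGH : ∀ x : C, G.obj (H.obj x) = F.obj x := fun x => by
    have h := Functor.congr_obj hcomm x
    rw [Functor.comp_obj, Functor.comp_obj, hJobj] at h
    exact h
  have hJ0 : ∀ (a b : B) (g : a ⟶ b), g = 0 → J.map g = 0 := fun a b g hg => by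
    subst hg
    exact (AddMonoidHom.mk' (fun g : a ⟶ b => J.map g) (fun g g' => hJlin.1 _ _ g g')).map_zero
  have h1 : F.obj c = Jinv.obj (G.obj (H.obj c)) := by rw [hGH, hJinvobj]
  have h2 : Jinv.obj (G.obj dd) = G.obj dd := hJinvobj _
  obtain ⟨s, hs⟩ := (hFout c (G.obj dd)).2 (eqToHom h1 ≫ Jinv.map (G.map f) ≫ eqToHom h2)
  let Ψ : DirectSum {y : C // F.obj y = G.obj dd} (fun y => (c ⟶ y.1)) →+
      DirectSum {z : D // G.obj z = G.obj dd} (fun z => (H.obj c ⟶ z.1)) :=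
    DirectSum.toAddMonoid fun y =>
      (DirectSum.of (fun z : {z : D // G.obj z = G.obj dd} => (H.obj c ⟶ z.1))
          ⟨H.obj y.1, by rw [hGH]; exact y.2⟩).comp
        (AddMonoidHom.mk' (fun g => H.map g) (fun g g' => hHlin.1 _ _ g g'))
  have e1 : G.obj (H.obj c) = J.obj (F.obj c) := by rw [hGH, hJobj]
  have e2 : J.obj (G.obj dd) = G.obj dd := hJobj _
  have key : ∀ t, starOutHom k G hGlin (H.obj c) (G.obj dd) (Ψ t) =
      eqToHom e1 ≫ J.map (starOutHom k F hFlin c (G.obj dd) t) ≫ eqToHom e2 := by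
    intro t
    induction t using DirectSum.induction_on with
    | zero =>
        rw [map_zero, map_zero, map_zero, hJ0 _ _ _ rfl]
        simp
    | of y a =>
        simp only [Ψ, DirectSum.toAddMonoid_of, AddMonoidHom.comp_apply,
          AddMonoidHom.mk'_apply]
        rw [starOutHom_of, starOutHom_of]
        have hc := Functor.congr_hom hcomm a
        rw [Functor.comp_map, Functor.comp_map] at hc
        rw [hc, Functor.map_comp, eqToHom_map]
        simp
    | add u v hu hv =>
        rw [map_add, map_add, map_add, hJlin.1 _ _ _ _, Preadditive.add_comp,
          Preadditive.comp_add, hu, hv]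
  have hJJ := Functor.congr_hom hJ2 (G.map f)
  rw [Functor.comp_map, Functor.id_map] at hJJ
  have main : starOutHom k G hGlin (H.obj c) (G.obj dd) (Ψ s) = G.map f := by
    rw [key, hs, Functor.map_comp, Functor.map_comp, hJJ, eqToHom_map, eqToHom_map]
    simp
  have main2 : starOutHom k G hGlin (H.obj c) (G.obj dd)
      (DirectSum.of (fun z : {z : D // G.obj z = G.obj dd} => (H.obj c ⟶ z.1))
        ⟨dd, rfl⟩ f) = G.map f := by
    rw [starOutHom_of]
    simp
  have heq : Ψ s = DirectSum.of (fun z : {z : D // G.obj z = G.obj dd} =>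
      (H.obj c ⟶ z.1)) ⟨dd, rfl⟩ f :=
    (hGout (H.obj c) (G.obj dd)).1 (main.trans main2.symm)
  have hsupp : ∀ t, (Ψ t) ⟨dd, rfl⟩ = 0 := by
    intro t
    induction t using DirectSum.induction_on with
    | zero => simp
    | of y a =>
        simp only [Ψ, DirectSum.toAddMonoid_of, AddMonoidHom.comp_apply,
          AddMonoidHom.mk'_apply]
        exact DirectSum.of_eq_of_ne _ _ _
          (fun h => hno y.1 (by simpa using (congrArg Subtype.val h).symm))
    | add u v hu hv =>
        rw [map_add, DirectSum.add_apply, hu, hv, add_zero]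
  have hf0 : f = 0 := by
    have h := hsupp s
    rw [heq, DirectSum.of_eq_same] at h
    exact h
  exact hf hf0

lemma step_in (F : C ⥤ B) (G : D ⥤ B) (H : C ⥤ D) (J Jinv : B ⥤ B)
    (hFlin : IsLinearFunctor k F) (hGlin : IsLinearFunctor k G)
    (hHlin : IsLinearFunctor k H) (hJlin : IsLinearFunctor k J)
    (hJ2 : Jinv ⋙ J = 𝟭 B)
    (hJobj : ∀ b, J.obj b = b)
    (hJinvobj : ∀ b, Jinv.obj b = b)
    (hcomm : H ⋙ G = F ⋙ J)
    (hFin : ∀ (x : C) (c : B), Function.Bijective (starInHom k F hFlin x c))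
    (hGin : ∀ (x : D) (c : B), Function.Bijective (starInHom k G hGlin x c))
    (c : C) (dd : D) (f : dd ⟶ H.obj c) (hf : f ≠ 0) :
    ∃ c', H.obj c' = dd := by
  classical
  by_contra hno
  push_neg at hno
  have hGH : ∀ x : C, G.obj (H.obj x) = F.obj x := fun x => by
    have h := Functor.congr_obj hcomm x
    rw [Functor.comp_obj, Functor.comp_obj, hJobj] at h
    exact h
  have hJ0 : ∀ (a b : B) (g : a ⟶ b), g = 0 → J.map g = 0 := fun a b g hg => by
    subst hg
    exact (AddMonoidHom.mk' (fun g : a ⟶ b => J.map g) (fun g g' => hJlin.1 _ _ g g')).map_zero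
  have h1 : Jinv.obj (G.obj (H.obj c)) = F.obj c := by rw [hGH, hJinvobj]
  have h2 : G.obj dd = Jinv.obj (G.obj dd) := (hJinvobj _).symm
  obtain ⟨s, hs⟩ := (hFin c (G.obj dd)).2 (eqToHom h2 ≫ Jinv.map (G.map f) ≫ eqToHom h1)
  let Ψ : DirectSum {y : C // F.obj y = G.obj dd} (fun y => (y.1 ⟶ c)) →+
      DirectSum {z : D // G.obj z = G.obj dd} (fun z => (z.1 ⟶ H.obj c)) :=
    DirectSum.toAddMonoid fun y =>
      (DirectSum.of (fun z : {z : D // G.obj z = G.obj dd} => (z.1 ⟶ H.obj c))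
          ⟨H.obj y.1, by rw [hGH]; exact y.2⟩).comp
        (AddMonoidHom.mk' (fun g => H.map g) (fun g g' => hHlin.1 _ _ g g'))
  have e1 : J.obj (F.obj c) = G.obj (H.obj c) := by rw [hGH, hJobj]
  have e2 : G.obj dd = J.obj (G.obj dd) := (hJobj _).symm
  have key : ∀ t, starInHom k G hGlin (H.obj c) (G.obj dd) (Ψ t) =
      eqToHom e2 ≫ J.map (starInHom k F hFlin c (G.obj dd) t) ≫ eqToHom e1 := by
    intro t
    induction t using DirectSum.induction_on with
    | zero =>
        rw [map_zero, map_zero, map_zero, hJ0 _ _ _ rfl]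
        simp
    | of y a =>
        simp only [Ψ, DirectSum.toAddMonoid_of, AddMonoidHom.comp_apply,
          AddMonoidHom.mk'_apply]
        rw [starInHom_of, starInHom_of]
        have hc := Functor.congr_hom hcomm a
        rw [Functor.comp_map, Functor.comp_map] at hc
        rw [hc, Functor.map_comp, eqToHom_map]
        simp
    | add u v hu hv =>
        rw [map_add, map_add, map_add, hJlin.1 _ _ _ _, Preadditive.add_comp,
          Preadditive.comp_add, hu, hv]
  have hJJ := Functor.congr_hom hJ2 (G.map f)
  rw [Functor.comp_map, Functor.id_map] at hJJ
  have main : starInHom k G hGlin (H.obj c) (G.obj dd) (Ψ s) = G.map f := by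
    rw [key, hs, Functor.map_comp, Functor.map_comp, hJJ, eqToHom_map, eqToHom_map]
    simp
  have main2 : starInHom k G hGlin (H.obj c) (G.obj dd)
      (DirectSum.of (fun z : {z : D // G.obj z = G.obj dd} => (z.1 ⟶ H.obj c))
        ⟨dd, rfl⟩ f) = G.map f := by
    rw [starInHom_of]
    simp
  have heq : Ψ s = DirectSum.of (fun z : {z : D // G.obj z = G.obj dd} =>
      (z.1 ⟶ H.obj c)) ⟨dd, rfl⟩ f :=
    (hGin (H.obj c) (G.obj dd)).1 (main.trans main2.symm)
  have hsupp : ∀ t, (Ψ t) ⟨dd, rfl⟩ = 0 := by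
    intro t
    induction t using DirectSum.induction_on with
    | zero => simp
    | of y a =>
        simp only [Ψ, DirectSum.toAddMonoid_of, AddMonoidHom.comp_apply,
          AddMonoidHom.mk'_apply]
        exact DirectSum.of_eq_of_ne _ _ _
          (fun h => hno y.1 (by simpa using (congrArg Subtype.val h).symm))
    | add u v hu hv =>
        rw [map_add, DirectSum.add_apply, hu, hv, add_zero]
  have hf0 : f = 0 := by
    have h := hsupp s
    rw [heq, DirectSum.of_eq_same] at h
    exact h
  exact hf hf0

end AuxProof
theorem galois_morphism_surjective_on_objects (k : Type w) [CommRing k]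
    {C : Type u} [Category.{v} C] [Preadditive C] [CategoryTheory.Linear k C]
    {B : Type u} [Category.{v} B] [Preadditive B] [CategoryTheory.Linear k B]
    {D : Type u} [Category.{v} D] [Preadditive D] [CategoryTheory.Linear k D]
    (F : C ⥤ B) (G : D ⥤ B) (hF : IsGaloisCovering k F) (hG : IsGaloisCovering k G)
    (H : C ⥤ D) (J : B ⥤ B) (hHJ : IsCoveringMorphism k F G H J) :
    Function.Surjective H.obj := by
  classical
  intro dd
  obtain ⟨⟨hFlin, hFsurj, hFout, hFin⟩, hCconn, -⟩ := hF
  obtain ⟨⟨hGlin, hGsurj, hGout, hGin⟩, hDconn, -⟩ := hG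
  obtain ⟨hHlin, hJlin, ⟨Jinv, hJ1, hJ2⟩, hJobj, hcomm⟩ := hHJ
  have hJinvobj : ∀ b, Jinv.obj b = b := fun b => by
    have h := Functor.congr_obj hJ1 b
    rw [Functor.comp_obj, Functor.id_obj, hJobj] at h
    exact h
  obtain ⟨c₀, hc₀⟩ := hFsurj (G.obj dd)
  have main : ∀ a b : D, Relation.EqvGen (fun a b : D => ∃ f : a ⟶ b, f ≠ 0) a b →
      ((∃ c, H.obj c = a) ↔ (∃ c, H.obj c = b)) := by
    intro a b h
    induction h with
    | rel a b hab =>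
        obtain ⟨f, hf⟩ := hab
        constructor
        · rintro ⟨c, rfl⟩
          exact step_out F G H J Jinv hFlin hGlin hHlin hJlin hJ2 hJobj hJinvobj hcomm
            hFout hGout c b f hf
        · rintro ⟨c, rfl⟩
          exact step_in F G H J Jinv hFlin hGlin hHlin hJlin hJ2 hJobj hJinvobj hcomm
            hFin hGin c a f hf
    | refl a => exact Iff.rfl
    | symm a b _ ih => exact ih.symm
    | trans a b c _ _ ih1 ih2 => exact ih1.trans ih2
  exact (main (H.obj c₀) dd (hDconn _ _)).1 ⟨c₀, rfl⟩
end
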